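/- Let n ≥ 2 be an integer, μ ∈ ℝ, L > 0, and let x = (x_1,…,x_n) and x' = (x'_1,…,x'_n) be vectors in [μ−L, μ+L]^n that differ in exactly one coordinate. Let 0 < ε ≤ 1 and 0 < δ ≤ 1, and set σ_{2,DP}² = 32L⁴·ln(1.25/δ)/ε². Define the unbiased sample variance v(x) = (x_1²+⋯+x_n²)/(n−1) − (x_1+⋯+x_n)²/(n(n−1)). Then for every Borel set S ⊆ ℝ, P_{W∼N(0,σ_{2,DP}²)}( v(x) + W/n ∈ S ) ≤ e^ε · P_{W∼N(0,σ_{2,DP}²)}( v(x') + W/n ∈ S ) + δ. -/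

import Mathlib

open MeasureTheory ProbabilityTheory
open scoped NNReal ENNReal
open Real (pi)
local notation "π" => Real.pi

lemma gauss_map_neg (m : ℝ) (v : ℝ≥0) :
    (gaussianReal m v).map (fun x => -x) = gaussianReal (-m) v := by
  have h := gaussianReal_map_const_mul (μ := m) (v := v) (-1)
  have h2 : (⟨(-1:ℝ)^2, sq_nonneg _⟩ : ℝ≥0) = 1 := by ext; norm_num
  simp only [neg_one_mul] at h
  convert h using 2; ext; simp

lemma gauss_Ioi (t : ℝ) (v : ℝ≥0) (a : ℝ) :
    gaussianReal t v (Set.Ioi a) = gaussianReal 0 v (Set.Ioi (a - t)) := by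
  have h := gaussianReal_map_add_const (μ := 0) (v := v) t
  rw [zero_add] at h
  rw [← h, Measure.map_apply (measurable_add_const t) measurableSet_Ioi]
  congr 1
  ext w
  simp [sub_lt_iff_lt_add]

lemma gauss_Iio (t : ℝ) (v : ℝ≥0) (a : ℝ) :
    gaussianReal t v (Set.Iio a) = gaussianReal (-t) v (Set.Ioi (-a)) := by
  rw [← gauss_map_neg, Measure.map_apply measurable_neg measurableSet_Ioi]
  congr 1
  ext w
  simp [neg_lt_neg_iff]

lemma gauss_half (v : ℝ≥0) (hv : v ≠ 0) : gaussianReal 0 v (Set.Ioi (0:ℝ)) = 1/2 := by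
  have hsym : gaussianReal 0 v (Set.Iio (0:ℝ)) = gaussianReal 0 v (Set.Ioi (0:ℝ)) := by
    conv_lhs => rw [← neg_zero, ← gauss_map_neg 0 v]
    rw [Measure.map_apply measurable_neg measurableSet_Iio]
    congr 1
    ext w
    simp
  have h0 : gaussianReal 0 v ({(0:ℝ)} : Set ℝ) = 0 :=
    gaussianReal_absolutelyContinuous 0 hv (by simp)
  have hcompl : gaussianReal 0 v ({(0:ℝ)}ᶜ) = 1 := by
    rw [measure_compl (measurableSet_singleton 0) (measure_ne_top _ _), h0, measure_univ]
    simp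
  rw [← Set.Iio_union_Ioi, measure_union ((Set.Iio_disjoint_Ici le_rfl).mono_right Set.Ioi_subset_Ici_self) measurableSet_Ioi,
    hsym] at hcompl
  have h2 : 2 * gaussianReal 0 v (Set.Ioi (0:ℝ)) = 1 := by rw [two_mul]; exact hcompl
  rw [ENNReal.eq_div_iff (by norm_num) (by norm_num)]
  exact h2

lemma gauss_tail_nonneg {v : ℝ≥0} (hv : v ≠ 0) {a : ℝ} (ha : 0 ≤ a) :
    gaussianReal 0 v (Set.Ioi a) ≤ ENNReal.ofReal (Real.exp (-a^2/(2*v)) * (1/2)) := by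
  have hvpos : (0:ℝ) < v := by positivity
  calc gaussianReal 0 v (Set.Ioi a) = ∫⁻ w in Set.Ioi a, gaussianPDF 0 v w :=
        gaussianReal_apply _ hv _
    _ ≤ ∫⁻ w in Set.Ioi a, ENNReal.ofReal (Real.exp (-a^2/(2*v))) * gaussianPDF a v w := by
        refine setLIntegral_mono (measurable_const.mul (measurable_gaussianPDF a v)) ?_
        intro w hw
        rw [Set.mem_Ioi] at hw
        rw [gaussianPDF, gaussianPDF, ← ENNReal.ofReal_mul (Real.exp_nonneg _)]
        refine ENNReal.ofReal_le_ofReal ?_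
        rw [gaussianPDFReal, gaussianPDFReal, mul_left_comm, ← Real.exp_add]
        refine mul_le_mul_of_nonneg_left (Real.exp_le_exp.2 ?_) (by positivity)
        rw [← add_div, div_le_div_iff₀ (by positivity) (by positivity)]
        nlinarith [mul_nonneg (mul_nonneg ha (sub_nonneg.2 hw.le)) (le_of_lt hvpos)]
    _ = ENNReal.ofReal (Real.exp (-a^2/(2*v))) * gaussianReal a v (Set.Ioi a) := by
        rw [lintegral_const_mul _ (measurable_gaussianPDF a v), ← gaussianReal_apply _ hv]
    _ = ENNReal.ofReal (Real.exp (-a^2/(2*v))) * (1/2) := by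
        rw [gauss_Ioi, sub_self, gauss_half v hv]
    _ = ENNReal.ofReal (Real.exp (-a^2/(2*v)) * (1/2)) := by
        rw [ENNReal.ofReal_mul (Real.exp_nonneg _), ENNReal.ofReal_div_of_pos two_pos,
          ENNReal.ofReal_one, ENNReal.ofReal_ofNat]

lemma gauss_tail_neg {v : ℝ≥0} (hv : v ≠ 0) {a : ℝ} (ha : a ≤ 0) :
    gaussianReal 0 v (Set.Ioi a) ≤ ENNReal.ofReal (1/2 + (-a) * (Real.sqrt (2*π*v))⁻¹) := by
  have hvpos : (0:ℝ) < v := by positivity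
  have hsplit : Set.Ioi a = Set.Ioc a 0 ∪ Set.Ioi (0:ℝ) := (Set.Ioc_union_Ioi_eq_Ioi ha).symm
  rw [hsplit, measure_union Set.Ioc_disjoint_Ioi_same measurableSet_Ioi]
  have h1 : gaussianReal 0 v (Set.Ioc a 0) ≤ ENNReal.ofReal ((-a) * (Real.sqrt (2*π*v))⁻¹) := by
    rw [gaussianReal_apply _ hv]
    calc ∫⁻ w in Set.Ioc a 0, gaussianPDF 0 v w
        ≤ ∫⁻ _ in Set.Ioc a 0, ENNReal.ofReal ((Real.sqrt (2*π*v))⁻¹) := by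
          refine setLIntegral_mono measurable_const ?_
          intro w _
          refine ENNReal.ofReal_le_ofReal ?_
          rw [gaussianPDFReal]
          refine mul_le_of_le_one_right (by positivity) ?_
          rw [neg_div]
          exact Real.exp_le_one_iff.2 (neg_nonpos.2 (by positivity))
      _ = ENNReal.ofReal ((Real.sqrt (2*π*v))⁻¹) * volume (Set.Ioc a 0) := setLIntegral_const _ _
      _ = ENNReal.ofReal ((-a) * (Real.sqrt (2*π*v))⁻¹) := by
          rw [Real.volume_Ioc, ← ENNReal.ofReal_mul (by positivity), zero_sub, mul_comm]
  have h2 : gaussianReal 0 v (Set.Ioi (0:ℝ)) = ENNReal.ofReal (1/2) := by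
    rw [gauss_half v hv, ENNReal.ofReal_div_of_pos two_pos, ENNReal.ofReal_one,
      ENNReal.ofReal_ofNat]
  calc gaussianReal 0 v (Set.Ioc a 0) + gaussianReal 0 v (Set.Ioi (0:ℝ))
      ≤ ENNReal.ofReal ((-a) * (Real.sqrt (2*π*v))⁻¹) + ENNReal.ofReal (1/2) := by
        exact add_le_add h1 (le_of_eq h2)
    _ = ENNReal.ofReal (1/2 + (-a) * (Real.sqrt (2*π*v))⁻¹) := by
        rw [← ENNReal.ofReal_add (mul_nonneg (neg_nonneg.2 ha) (by positivity)) (by norm_num),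
          add_comm]

lemma log_one_point_two_five : (1/5 : ℝ) ≤ Real.log 1.25 := by
  have h5 : Real.exp (1/5) ^ (5:ℕ) = Real.exp 1 := by
    rw [← Real.exp_nat_mul]; norm_num
  have h1 : Real.exp (1/5) ≤ 1.25 := by
    by_contra h
    push_neg at h
    have h2 : (1.25:ℝ)^(5:ℕ) < Real.exp (1/5) ^ (5:ℕ) :=
      pow_lt_pow_left₀ h (by norm_num) (by norm_num)
    rw [h5] at h2
    nlinarith [Real.exp_one_lt_d9]
  calc (1/5 : ℝ) = Real.log (Real.exp (1/5)) := (Real.log_exp _).symm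
    _ ≤ Real.log 1.25 := Real.log_le_log (Real.exp_pos _) h1

lemma log_two_point_five : (1/2 : ℝ) ≤ Real.log 2.5 := by
  have hsq : Real.exp (1/2) ^ (2:ℕ) = Real.exp 1 := by
    rw [← Real.exp_nat_mul]; norm_num
  have h1 : Real.exp (1/2) ≤ 2.5 := by
    nlinarith [Real.exp_one_lt_d9, Real.exp_pos (1/2:ℝ)]
  calc (1/2 : ℝ) = Real.log (Real.exp (1/2)) := (Real.log_exp _).symm
    _ ≤ Real.log 2.5 := Real.log_le_log (Real.exp_pos _) h1

lemma tail_delta (Δ ε δ : ℝ) (hΔ : 0 < Δ) (hε : 0 < ε) (hε1 : ε ≤ 1)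
    (hδ : 0 < δ) (hδ1 : δ ≤ 1) (v : ℝ≥0)
    (hv : (v:ℝ) = 2*Δ^2*Real.log (1.25/δ)/ε^2) :
    gaussianReal 0 v (Set.Ioi (ε*(v:ℝ)/Δ - Δ/2)) ≤ ENNReal.ofReal δ := by
  set L' := Real.log (1.25/δ) with hL'def
  have hL5 : (1/5 : ℝ) ≤ L' := by
    refine le_trans log_one_point_two_five (Real.log_le_log (by norm_num) ?_)
    rw [le_div_iff₀ hδ]; nlinarith
  have hL'pos : 0 < L' := by linarith
  have hvpos : (0:ℝ) < v := by
    rw [hv]; positivity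
  have hv0 : v ≠ 0 := by
    intro h; rw [h] at hvpos; simp at hvpos
  have hδexp : δ = 1.25 * Real.exp (-L') := by
    rw [Real.exp_neg, hL'def, Real.exp_log (by positivity : (0:ℝ) < 1.25/δ)]
    field_simp
  set a0 : ℝ := ε*(v:ℝ)/Δ - Δ/2 with ha0def
  have ha0' : a0 = Δ*(4*L' - ε)/(2*ε) := by
    rw [ha0def, hv]; field_simp; ring
  rcases le_or_gt 0 a0 with h0 | h0
  · refine le_trans (gauss_tail_nonneg hv0 h0) (ENNReal.ofReal_le_ofReal ?_)
    have hid : -a0^2/(2*(v:ℝ)) = -L' + ε/2 - ε^2/(16*L') := by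
      rw [ha0', hv]; field_simp; ring
    have hkey : -a0^2/(2*(v:ℝ)) ≤ Real.log 2.5 - L' := by
      rw [hid]
      have : 0 ≤ ε^2/(16*L') := by positivity
      have h25 := log_two_point_five
      linarith
    calc Real.exp (-a0^2/(2*(v:ℝ))) * (1/2) ≤ Real.exp (Real.log 2.5 - L') * (1/2) := by
          have := Real.exp_le_exp.2 hkey
          linarith
      _ = δ := by
          rw [Real.exp_sub, Real.exp_log (by norm_num : (0:ℝ) < 2.5), hδexp, Real.exp_neg]
          ring
  · refine le_trans (gauss_tail_neg hv0 h0.le) (ENNReal.ofReal_le_ofReal ?_)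
    have h4 : 4*L' - ε < 0 := by
      by_contra h
      push_neg at h
      have : 0 ≤ a0 := by rw [ha0']; positivity
      linarith
    have hna0 : -a0 ≤ Δ/(10*ε) := by
      rw [ha0', ← neg_div, div_le_div_iff₀ (by positivity) (by positivity)]
      nlinarith [mul_nonneg (mul_nonneg hε.le hΔ.le) (by linarith : (0:ℝ) ≤ 1/5 - (ε - 4*L'))]
    have hsqrt : 1.5*Δ/ε ≤ Real.sqrt (2*π*(v:ℝ)) := by
      rw [Real.le_sqrt (by positivity) (by positivity)]
      have hπ : (3.14:ℝ) ≤ π := by nlinarith [Real.pi_gt_d6]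
      have h2 : 2*π*(v:ℝ) = (4*π*Δ^2*L')/ε^2 := by rw [hv]; ring
      rw [h2, div_pow, div_le_div_iff₀ (by positivity) (by positivity)]
      have hπL : (3.14:ℝ) * (1/5) ≤ π * L' :=
        mul_le_mul hπ hL5 (by norm_num) (by linarith)
      nlinarith [mul_nonneg (mul_nonneg (sq_nonneg Δ) (sq_nonneg ε)) (by linarith : (0:ℝ) ≤ π * L' - 3.14 * (1/5)), mul_pos (mul_pos hΔ hΔ) (mul_pos hε hε)]
    have hinvle : (Real.sqrt (2*π*(v:ℝ)))⁻¹ ≤ ε/(1.5*Δ) := by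
      rw [← inv_div]
      exact inv_anti₀ (by positivity) hsqrt
    have hprod : (-a0) * (Real.sqrt (2*π*(v:ℝ)))⁻¹ ≤ 1/15 := by
      calc (-a0) * (Real.sqrt (2*π*(v:ℝ)))⁻¹ ≤ (Δ/(10*ε)) * (ε/(1.5*Δ)) := by
            refine mul_le_mul hna0 hinvle (by positivity) (by positivity)
        _ = 1/15 := by field_simp; ring
    have hδbig : (0.9:ℝ) ≤ δ := by
      rw [hδexp]
      have hL14 : L' < 1/4 := by linarith
      have : Real.exp (-(1/4:ℝ)) ≤ Real.exp (-L') := Real.exp_le_exp.2 (by linarith)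
      nlinarith [Real.add_one_le_exp (-(1/4:ℝ))]
    linarith

set_option maxHeartbeats 1000000 in
lemma gauss_core (Δ ε δ : ℝ) (hΔ : 0 < Δ) (hε : 0 < ε) (hε1 : ε ≤ 1)
    (hδ : 0 < δ) (hδ1 : δ ≤ 1) (v : ℝ≥0)
    (hv : (v:ℝ) = 2*Δ^2*Real.log (1.25/δ)/ε^2)
    (t : ℝ) (ht : |t| ≤ Δ) (A : Set ℝ) (hA : MeasurableSet A) :
    gaussianReal t v A ≤ ENNReal.ofReal (Real.exp ε) * gaussianReal 0 v A
      + ENNReal.ofReal δ := by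
  have hL5 : (1/5 : ℝ) ≤ Real.log (1.25/δ) := by
    have h5 : Real.exp (1/5) ^ (5:ℕ) = Real.exp 1 := by
      rw [← Real.exp_nat_mul]; norm_num
    have h1 : Real.exp (1/5) ≤ 1.25 := by
      by_contra h
      push_neg at h
      have h2 : (1.25:ℝ)^(5:ℕ) < Real.exp (1/5) ^ (5:ℕ) :=
        pow_lt_pow_left₀ h (by norm_num) (by norm_num)
      rw [h5] at h2
      nlinarith [Real.exp_one_lt_d9]
    calc (1/5 : ℝ) = Real.log (Real.exp (1/5)) := (Real.log_exp _).symm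
      _ ≤ Real.log 1.25 := Real.log_le_log (Real.exp_pos _) h1
      _ ≤ Real.log (1.25/δ) := by
          refine Real.log_le_log (by norm_num) ?_
          rw [le_div_iff₀ hδ]; nlinarith
  have hvpos : (0:ℝ) < v := by rw [hv]; positivity
  have hv0 : v ≠ 0 := by intro h; rw [h] at hvpos; simp at hvpos
  set B : Set ℝ := {w | ε*(v:ℝ) + t^2/2 < t*w} with hBdef
  have hB : MeasurableSet B := measurableSet_lt measurable_const (measurable_id.const_mul t)
  -- Step 1 : split
  have hsplit : gaussianReal t v A ≤
      ENNReal.ofReal (Real.exp ε) * gaussianReal 0 v A + gaussianReal t v B := by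
    calc gaussianReal t v A ≤ gaussianReal t v (A \ B) + gaussianReal t v (A ∩ B) := by
          conv_lhs => rw [← Set.diff_union_inter A B]
          exact measure_union_le _ _
      _ ≤ ENNReal.ofReal (Real.exp ε) * gaussianReal 0 v A + gaussianReal t v B := by
          refine add_le_add ?_ (measure_mono Set.inter_subset_right)
          have hmain : gaussianReal t v (A \ B) ≤
              ENNReal.ofReal (Real.exp ε) * gaussianReal 0 v (A \ B) := by
            rw [gaussianReal_apply _ hv0, gaussianReal_apply _ hv0,
              ← lintegral_const_mul _ (measurable_gaussianPDF 0 v)]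
            refine setLIntegral_mono (measurable_const.mul (measurable_gaussianPDF 0 v)) ?_
            intro w hw
            have hwB : ¬ (ε*(v:ℝ) + t^2/2 < t*w) := hw.2
            push_neg at hwB
            rw [gaussianPDF, gaussianPDF, ← ENNReal.ofReal_mul (Real.exp_nonneg _)]
            refine ENNReal.ofReal_le_ofReal ?_
            rw [gaussianPDFReal, gaussianPDFReal, mul_left_comm, ← Real.exp_add]
            refine mul_le_mul_of_nonneg_left (Real.exp_le_exp.2 ?_) (by positivity)
            rw [← sub_le_iff_le_add, div_sub_div_same, div_le_iff₀ (by positivity)]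
            nlinarith
          exact hmain.trans (mul_le_mul_right (measure_mono Set.diff_subset) _)
  refine hsplit.trans (add_le_add le_rfl ?_)
  -- Step 2 : the bad event has small probability
  rcases eq_or_ne t 0 with ht0 | ht0
  · have : B = ∅ := by
      ext w
      simp only [hBdef, Set.mem_setOf_eq, ht0, zero_mul, Set.mem_empty_iff_false, iff_false,
        not_lt]
      positivity
    rw [this]
    simp
  · have hεv : (0:ℝ) ≤ ε * v := by positivity
    rcases ht0.lt_or_gt with htneg | htpos
    · have hr : 0 < -t := by linarith
      have hrΔ : -t ≤ Δ := by rw [abs_le] at ht; linarith [ht.1]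
      have hBIio : B = Set.Iio ((ε*(v:ℝ) + t^2/2)/t) := by
        ext w
        rw [hBdef, Set.mem_setOf_eq, Set.mem_Iio, lt_div_iff_of_neg htneg, mul_comm w t]
      rw [hBIio, gauss_Iio, gauss_Ioi]
      have heq : -((ε*(v:ℝ) + t^2/2)/t) - -t = ε*(v:ℝ)/(-t) + t/2 := by
        field_simp
        ring
      refine le_trans (measure_mono (Set.Ioi_subset_Ioi ?_))
        (tail_delta Δ ε δ hΔ hε hε1 hδ hδ1 v hv)
      rw [heq]
      have h1 : ε*(v:ℝ)/Δ ≤ ε*(v:ℝ)/(-t) := by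
        apply div_le_div_of_nonneg_left hεv hr hrΔ
      linarith
    · have hrΔ : t ≤ Δ := by rw [abs_le] at ht; linarith [ht.2]
      have hBIoi : B = Set.Ioi ((ε*(v:ℝ) + t^2/2)/t) := by
        ext w
        rw [hBdef, Set.mem_setOf_eq, Set.mem_Ioi, div_lt_iff₀ htpos, mul_comm w t]
      rw [hBIoi, gauss_Ioi]
      have heq : (ε*(v:ℝ) + t^2/2)/t - t = ε*(v:ℝ)/t - t/2 := by
        field_simp
        ring
      refine le_trans (measure_mono (Set.Ioi_subset_Ioi ?_))
        (tail_delta Δ ε δ hΔ hε hε1 hδ hδ1 v hv)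
      rw [heq]
      have h1 : ε*(v:ℝ)/Δ ≤ ε*(v:ℝ)/t := by
        apply div_le_div_of_nonneg_left hεv htpos hrΔ
      linarith

lemma sens_bound (nR μ L a b s s2 : ℝ) (hL : 0 < L) (hn : 2 ≤ nR)
    (ha1 : μ - L ≤ a) (ha2 : a ≤ μ + L) (hb1 : μ - L ≤ b) (hb2 : b ≤ μ + L)
    (hs1 : (nR - 1) * (μ - L) ≤ s) (hs2 : s ≤ (nR - 1) * (μ + L)) :
    |nR * (((s2 + a^2)/(nR - 1) - (s + a)^2/(nR*(nR - 1)))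
      - ((s2 + b^2)/(nR - 1) - (s + b)^2/(nR*(nR - 1))))| ≤ 4*L^2 := by
  have hnpos : (0:ℝ) < nR := by linarith
  have hn1pos : (0:ℝ) < nR - 1 := by linarith
  set m : ℝ := s / (nR - 1) with hmdef
  have hmlo : μ - L ≤ m := by rw [hmdef, le_div_iff₀ hn1pos]; linarith
  have hmup : m ≤ μ + L := by rw [hmdef, div_le_iff₀ hn1pos]; linarith
  have key : nR * (((s2 + a^2)/(nR - 1) - (s + a)^2/(nR*(nR - 1)))
      - ((s2 + b^2)/(nR - 1) - (s + b)^2/(nR*(nR - 1)))) = (a - m)^2 - (b - m)^2 := by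
    rw [hmdef]
    field_simp
    ring
  rw [key, abs_le]
  constructor
  · nlinarith [sq_nonneg (a - m)]
  · nlinarith [sq_nonneg (b - m)]

set_option maxHeartbeats 1000000 in
/-- Gaussian mechanism guarantee for releasing the unbiased sample variance. -/
theorem gaussian_mechanism_variance_dp
    (n : ℕ) (hn : 2 ≤ n) (μ L : ℝ) (hL : 0 < L)
    (x x' : Fin n → ℝ)
    (hx : ∀ i, x i ∈ Set.Icc (μ - L) (μ + L))
    (hx' : ∀ i, x' i ∈ Set.Icc (μ - L) (μ + L))
    (hdiff : ∃ i, x i ≠ x' i ∧ ∀ j, j ≠ i → x j = x' j)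
    (ε δ : ℝ) (hε : 0 < ε) (hε1 : ε ≤ 1) (hδ : 0 < δ) (hδ1 : δ ≤ 1)
    (σ2DP2 : ℝ≥0) (hσ : (σ2DP2 : ℝ) = 32 * L ^ 4 * Real.log (1.25 / δ) / ε ^ 2)
    (S : Set ℝ) (hS : MeasurableSet S) :
    gaussianReal 0 σ2DP2
        {w | (∑ i, (x i) ^ 2) / (n - 1 : ℝ)
              - (∑ i, x i) ^ 2 / ((n : ℝ) * ((n : ℝ) - 1)) + w / n ∈ S}
      ≤ ENNReal.ofReal (Real.exp ε) *
          gaussianReal 0 σ2DP2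
            {w | (∑ i, (x' i) ^ 2) / (n - 1 : ℝ)
                  - (∑ i, x' i) ^ 2 / ((n : ℝ) * ((n : ℝ) - 1)) + w / n ∈ S}
        + ENNReal.ofReal δ := by
  obtain ⟨i, hne, hjeq⟩ := hdiff
  have hn2 : (2:ℝ) ≤ (n:ℝ) := by exact_mod_cast hn
  have hnne : (n:ℝ) ≠ 0 := by linarith
  have hn1ne : (n:ℝ) - 1 ≠ 0 := by intro h; linarith [h]
  have hs' : ∑ j ∈ Finset.univ.erase i, x' j = ∑ j ∈ Finset.univ.erase i, x j :=
    Finset.sum_congr rfl (fun j hj => (hjeq j (Finset.ne_of_mem_erase hj)).symm)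
  have hs2' : ∑ j ∈ Finset.univ.erase i, (x' j)^2 = ∑ j ∈ Finset.univ.erase i, (x j)^2 :=
    Finset.sum_congr rfl (fun j hj => by rw [hjeq j (Finset.ne_of_mem_erase hj)])
  have hsumx : ∑ j, x j = (∑ j ∈ Finset.univ.erase i, x j) + x i :=
    (Finset.sum_erase_add _ _ (Finset.mem_univ i)).symm
  have hsumx' : ∑ j, x' j = (∑ j ∈ Finset.univ.erase i, x j) + x' i := by
    rw [← hs']
    exact (Finset.sum_erase_add _ _ (Finset.mem_univ i)).symm
  have hsumxsq : ∑ j, (x j)^2 = (∑ j ∈ Finset.univ.erase i, (x j)^2) + (x i)^2 :=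
    (Finset.sum_erase_add _ _ (Finset.mem_univ i)).symm
  have hsumxsq' : ∑ j, (x' j)^2 = (∑ j ∈ Finset.univ.erase i, (x j)^2) + (x' i)^2 := by
    rw [← hs2']
    exact (Finset.sum_erase_add _ _ (Finset.mem_univ i)).symm
  have hcard : ((Finset.univ.erase i).card : ℝ) = (n:ℝ) - 1 := by
    rw [Finset.card_erase_of_mem (Finset.mem_univ i), Finset.card_univ, Fintype.card_fin]
    have h1 : 1 ≤ n := le_trans one_le_two hn
    push_cast [Nat.cast_sub h1]
    ring
  have hsup : (∑ j ∈ Finset.univ.erase i, x j) ≤ ((n:ℝ) - 1) * (μ + L) := by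
    rw [← hcard]
    calc ∑ j ∈ Finset.univ.erase i, x j ≤ ∑ _j ∈ Finset.univ.erase i, (μ + L) :=
          Finset.sum_le_sum (fun j _ => (hx j).2)
      _ = ((Finset.univ.erase i).card : ℝ) * (μ + L) := by
          rw [Finset.sum_const, nsmul_eq_mul]
  have hslo : ((n:ℝ) - 1) * (μ - L) ≤ ∑ j ∈ Finset.univ.erase i, x j := by
    rw [← hcard]
    calc ((Finset.univ.erase i).card : ℝ) * (μ - L)
        = ∑ _j ∈ Finset.univ.erase i, (μ - L) := by rw [Finset.sum_const, nsmul_eq_mul]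
      _ ≤ ∑ j ∈ Finset.univ.erase i, x j := Finset.sum_le_sum (fun j _ => (hx j).1)
  set vx : ℝ := (∑ j, (x j)^2) / ((n:ℝ) - 1) - (∑ j, x j)^2 / ((n:ℝ) * ((n:ℝ) - 1))
    with hvxdef
  set vx' : ℝ := (∑ j, (x' j)^2) / ((n:ℝ) - 1) - (∑ j, x' j)^2 / ((n:ℝ) * ((n:ℝ) - 1))
    with hvxdef'
  set t : ℝ := (n:ℝ) * (vx - vx') with htdef
  have htbound : |t| ≤ 4*L^2 := by
    rw [htdef, hvxdef, hvxdef', hsumx, hsumx', hsumxsq, hsumxsq']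
    exact sens_bound (n:ℝ) μ L (x i) (x' i) _ _ hL hn2
      (hx i).1 (hx i).2 (hx' i).1 (hx' i).2 hslo hsup
  set A' : Set ℝ := {w | vx' + w / n ∈ S} with hA'def
  have hA' : MeasurableSet A' :=
    ((measurable_id.div_const (n:ℝ)).const_add vx') hS
  have hpre : {w : ℝ | vx + w / n ∈ S} = (fun w => w + t) ⁻¹' A' := by
    ext w
    simp only [hA'def, Set.mem_setOf_eq, Set.mem_preimage]
    have harg : vx' + (w + t) / n = vx + w / n := by
      rw [htdef]
      field_simp
      ring
    rw [harg]
  show gaussianReal 0 σ2DP2 {w : ℝ | vx + w / n ∈ S}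
      ≤ ENNReal.ofReal (Real.exp ε) * gaussianReal 0 σ2DP2 A' + ENNReal.ofReal δ
  rw [hpre, ← Measure.map_apply (measurable_add_const t) hA',
    gaussianReal_map_add_const, zero_add]
  exact gauss_core (4*L^2) ε δ (by positivity) hε hε1 hδ hδ1 σ2DP2
    (by rw [hσ]; ring) t htbound A' hA'
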